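/- Let v : (−∞, 0] → ℝ be twice differentiable with v′(t) > 0 for all t ≤ 0. Suppose v is bounded on (−∞, 0], and suppose there is a constant M such that |v″(t)/v′(t)| ≤ M for all t ≤ 0. Then v′ is bounded on (−∞, 0]. -/

import Mathlib

/-- If `v` is twice differentiable on `(-∞, 0]` with `v' > 0`, `v` bounded, and
`|v''/v'| ≤ M` there, then `v'` is bounded on `(-∞, 0]`. -/
theorem stmt_8 (v v' v'' : ℝ → ℝ) (M : ℝ)
    (hd1 : ∀ t ≤ (0 : ℝ), HasDerivWithinAt v (v' t) (Set.Iic 0) t)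
    (hd2 : ∀ t ≤ (0 : ℝ), HasDerivWithinAt v' (v'' t) (Set.Iic 0) t)
    (hpos : ∀ t ≤ (0 : ℝ), 0 < v' t)
    (hbd : ∃ B : ℝ, ∀ t ≤ (0 : ℝ), |v t| ≤ B)
    (hM : ∀ t ≤ (0 : ℝ), |v'' t / v' t| ≤ M) :
    ∃ C : ℝ, ∀ t ≤ (0 : ℝ), |v' t| ≤ C := by
  obtain ⟨B, hB⟩ := hbd
  have hM0 : 0 ≤ M := le_trans (abs_nonneg _) (hM 0 le_rfl)
  set g : ℝ → ℝ := fun t => Real.log (v' t) with hg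
  have hgd : ∀ x ∈ Set.Iic (0:ℝ), HasDerivWithinAt g (v'' x / v' x) (Set.Iic 0) x := by
    intro x hx
    have h := (Real.hasDerivAt_log (hpos x hx).ne').comp_hasDerivWithinAt x (hd2 x hx)
    rw [show v'' x / v' x = (v' x)⁻¹ * v'' x by ring]
    exact h
  have hlip : ∀ x ∈ Set.Iic (0:ℝ), ∀ y ∈ Set.Iic (0:ℝ), ‖g y - g x‖ ≤ M * ‖y - x‖ :=
    fun x hx y hy => (convex_Iic (0:ℝ)).norm_image_sub_le_of_norm_hasDerivWithin_le hgd
      (fun z hz => by rw [Real.norm_eq_abs]; exact hM z hz) hx hy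
  refine ⟨2 * B * Real.exp M, fun t ht => ?_⟩
  have hcont0 : ContinuousOn v (Set.Iic (0:ℝ)) := fun x hx => (hd1 x hx).continuousWithinAt
  have hcont : ContinuousOn v (Set.Icc (t-1) t) :=
    hcont0.mono (fun x hx => le_trans hx.2 ht)
  have hderiv : ∀ x ∈ Set.Ioo (t-1) t, HasDerivAt v (v' x) x := fun x hx =>
    (hd1 x (hx.2.trans_le ht).le).hasDerivAt (Iic_mem_nhds (hx.2.trans_le ht))
  obtain ⟨c, hc, hc'⟩ := exists_hasDerivAt_eq_slope v v' (by linarith) hcont hderiv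
  have hcle : c ≤ 0 := (hc.2.trans_le ht).le
  have hvc : v' c = v t - v (t-1) := by
    rw [hc']; norm_num
  have hvcB : v' c ≤ 2 * B := by
    have h1 := hB t ht
    have h2 := hB (t-1) (by linarith)
    rw [hvc]
    have := abs_le.mp h1
    have := abs_le.mp h2
    linarith
  have htc : |t - c| ≤ 1 := by
    rw [abs_le]; constructor <;> [linarith [hc.2]; linarith [hc.1]]
  have hgt : g t - g c ≤ M := by
    have := hlip c hcle t ht
    rw [Real.norm_eq_abs, Real.norm_eq_abs] at this
    have h2 : M * |t - c| ≤ M * 1 := mul_le_mul_of_nonneg_left htc hM0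
    have h3 := (abs_le.mp (le_trans this (by linarith : M * |t - c| ≤ M))).2
    linarith
  have hvt : v' t = Real.exp (g t) := (Real.exp_log (hpos t ht)).symm
  have hvcexp : v' c = Real.exp (g c) := (Real.exp_log (hpos c hcle)).symm
  have : v' t ≤ v' c * Real.exp M := by
    rw [hvt, hvcexp, ← Real.exp_add]
    exact Real.exp_le_exp.mpr (by linarith)
  rw [abs_of_pos (hpos t ht)]
  calc v' t ≤ v' c * Real.exp M := this
    _ ≤ 2 * B * Real.exp M := mul_le_mul_of_nonneg_right hvcB (Real.exp_pos M).le
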